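/- For every integer r ≥ 1, every integer j with k+1 ≤ j < k+r, and every real C ≥ 0 there is a constant β' (depending only on r, j−k and C) with the following property. Let 𝔽 be a field, let Π_0 ⊊ Π_1 be linear subspaces of 𝔽^d with dim Π_0 = k and dim Π_1 = k + r, let Δ be the set of lines through the origin contained in Π_1 but not contained in Π_0, and let f : L_0 → [0,∞) be finitely supported. Suppose that for every linear subspace π with Π_0 ⊊ π ⊊ Π_1 one has Σ_{l ⊆ π, l ⊄ Π_0} f(l) ≤ C · Σ_{l ⊆ Π_1, l ⊄ π} f(l). For k+1 ≤ i ≤ k+r let Γ_i = {(l_1,…,l_r) ∈ Δ^r : the span of Π_0 together with l_1, …, l_r has dimension i}. Then Σ_{(l_1,…,l_r)∈Γ_j} f(l_1)⋯f(l_r) ≤ β' · Σ_{(l_1,…,l_r)∈Γ_{j+1}} f(l_1)⋯f(l_r). -/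

import Mathlib

set_option maxHeartbeats 1000000


/- STATEMENT 10: The inductive step in the proof of Lemma 2 of the paper:
   the sum over Γ_j is controlled by the sum over Γ_{j+1}, with a constant
   depending only on r, j−k and C.  Here j = k + s with 1 ≤ s < r. -/

open scoped NNReal ENNReal

/-- A line through the origin in `𝔽^d`: a one-dimensional linear subspace. -/
def LineO (𝔽 : Type*) [Field 𝔽] (d : ℕ) : Type _ :=
  {W : Submodule 𝔽 (Fin d → 𝔽) // Module.finrank 𝔽 W = 1}

section aux
open Module
variable {𝔽 : Type*} [Field 𝔽] {d : ℕ}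

lemma sup_split {r : ℕ} (P₀ : Submodule 𝔽 (Fin d → 𝔽)) (t : Fin r → LineO 𝔽 d) (m : Fin r) :
    P₀ ⊔ ⨆ i, (t i).1 = (P₀ ⊔ ⨆ j : {j : Fin r // j ≠ m}, (t j.1).1) ⊔ (t m).1 := by
  apply le_antisymm
  · refine sup_le (le_sup_of_le_left le_sup_left) (iSup_le fun i => ?_)
    by_cases h : i = m
    · subst h; exact le_sup_right
    · exact le_sup_of_le_left (le_sup_of_le_right
        (le_iSup (fun j : {j : Fin r // j ≠ m} => (t j.1).1) ⟨i, h⟩))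
  · refine sup_le (sup_le le_sup_left
      (iSup_le fun j => le_sup_of_le_right (le_iSup (fun i => (t i).1) j.1)))
      (le_sup_of_le_right (le_iSup (fun i => (t i).1) m))

lemma finrank_sup_line {σ : Submodule 𝔽 (Fin d → 𝔽)} (l : LineO 𝔽 d) (h : ¬ l.1 ≤ σ) :
    finrank 𝔽 ↥(σ ⊔ l.1) = finrank 𝔽 ↥σ + 1 := by
  have h1 : finrank 𝔽 ↥(σ ⊔ l.1) + finrank 𝔽 ↥(σ ⊓ l.1) = finrank 𝔽 ↥σ + finrank 𝔽 ↥l.1 :=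
    Submodule.finrank_sup_add_finrank_inf_eq σ l.1
  have h2 : finrank 𝔽 ↥σ < finrank 𝔽 ↥(σ ⊔ l.1) :=
    Submodule.finrank_lt_finrank_of_lt
      (lt_of_le_of_ne le_sup_left (fun he => h (he ▸ le_sup_right)))
  have h3 := l.2
  omega

lemma exists_redundant {r k s : ℕ} (hsr : s < r) (P₀ : Submodule 𝔽 (Fin d → 𝔽))
    (hk : finrank 𝔽 P₀ = k) (t : Fin r → LineO 𝔽 d)
    (hdim : finrank 𝔽 ↥(P₀ ⊔ ⨆ i, (t i).1) = k + s) :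
    ∃ m, (t m).1 ≤ P₀ ⊔ ⨆ j : {j : Fin r // j ≠ m}, (t j.1).1 := by
  by_contra hc
  push_neg at hc
  have key : ∀ S : Finset (Fin r), k + S.card ≤ finrank 𝔽 ↥(P₀ ⊔ ⨆ i ∈ S, (t i).1) := by
    intro S
    induction S using Finset.induction_on with
    | empty =>
      simp only [Finset.card_empty, add_zero]
      have : (⨆ i ∈ (∅ : Finset (Fin r)), (t i).1) = ⊥ := by simp
      rw [this, sup_bot_eq, hk]
    | @insert a S hm ih =>
      have hsplit : P₀ ⊔ ⨆ i ∈ insert a S, (t i).1 = (P₀ ⊔ ⨆ i ∈ S, (t i).1) ⊔ (t a).1 := by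
        rw [Finset.iSup_insert]
        rw [sup_comm ((t a).1) (⨆ i ∈ S, (t i).1), ← sup_assoc]
      have hle : (P₀ ⊔ ⨆ i ∈ S, (t i).1) ≤ P₀ ⊔ ⨆ j : {j : Fin r // j ≠ a}, (t j.1).1 := by
        refine sup_le le_sup_left ?_
        refine iSup_le fun i => iSup_le fun hi => ?_
        exact le_sup_of_le_right (le_iSup (fun j : {j : Fin r // j ≠ a} => (t j.1).1)
          ⟨i, fun he => hm (he ▸ hi)⟩)
      have hna : ¬ (t a).1 ≤ P₀ ⊔ ⨆ i ∈ S, (t i).1 := fun hle' => hc a (hle'.trans hle)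
      have hlt : (P₀ ⊔ ⨆ i ∈ S, (t i).1) < P₀ ⊔ ⨆ i ∈ insert a S, (t i).1 := by
        rw [hsplit]
        exact lt_of_le_of_ne le_sup_left (fun he => hna (he ▸ le_sup_right))
      have := Submodule.finrank_lt_finrank_of_lt hlt
      rw [Finset.card_insert_of_notMem hm]
      omega
  have h1 := key Finset.univ
  have h2 : (⨆ i ∈ Finset.univ, (t i).1) = ⨆ i, (t i).1 := by simp
  rw [h2, hdim] at h1
  simp at h1
  omega

/-- The per-`u` inner inequality, with the "replace the `m`-th coordinate" map `T`
abstracted away. -/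
lemma inner_bound {r k s : ℕ} (P₀ P₁ : Submodule 𝔽 (Fin d → 𝔽)) (hP₀₁ : P₀ < P₁)
    (hk : finrank 𝔽 P₀ = k) (hk1 : finrank 𝔽 P₁ = k + r) (hs : 1 ≤ s) (hsr : s < r)
    (C : ℝ≥0) (f : LineO 𝔽 d → ℝ≥0)
    (hlight : ∀ π : Submodule 𝔽 (Fin d → 𝔽), P₀ < π → π < P₁ →
      (∑' l : {l : LineO 𝔽 d // l.1 ≤ π ∧ ¬ l.1 ≤ P₀}, (f l.1 : ℝ≥0∞)) ≤
        (C : ℝ≥0∞) * ∑' l : {l : LineO 𝔽 d // l.1 ≤ P₁ ∧ ¬ l.1 ≤ π}, (f l.1 : ℝ≥0∞))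
    (m : Fin r) (u : {j : Fin r // j ≠ m} → LineO 𝔽 d)
    (T : LineO 𝔽 d → (Fin r → LineO 𝔽 d))
    (hTm : ∀ x, T x m = x) (hTj : ∀ x (j : {j : Fin r // j ≠ m}), T x j.1 = u j) :
    (∑' x : LineO 𝔽 d,
        Set.indicator {t : Fin r → LineO 𝔽 d |
            ((∀ i, (t i).1 ≤ P₁ ∧ ¬ (t i).1 ≤ P₀) ∧
              finrank 𝔽 ↥(P₀ ⊔ ⨆ i, (t i).1) = k + s) ∧
            (t m).1 ≤ P₀ ⊔ ⨆ j : {j : Fin r // j ≠ m}, (t j.1).1}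
          (fun t => ∏ i, (f (t i) : ℝ≥0∞)) (T x)) ≤
      (C : ℝ≥0∞) * ∑' x : LineO 𝔽 d,
        Set.indicator {t : Fin r → LineO 𝔽 d |
            (∀ i, (t i).1 ≤ P₁ ∧ ¬ (t i).1 ≤ P₀) ∧
            finrank 𝔽 ↥(P₀ ⊔ ⨆ i, (t i).1) = k + s + 1}
          (fun t => ∏ i, (f (t i) : ℝ≥0∞)) (T x) := by
  classical
  set F : (Fin r → LineO 𝔽 d) → ℝ≥0∞ := fun t => ∏ i, (f (t i) : ℝ≥0∞) with hF
  set Am : Set (Fin r → LineO 𝔽 d) := {t : Fin r → LineO 𝔽 d |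
      ((∀ i, (t i).1 ≤ P₁ ∧ ¬ (t i).1 ≤ P₀) ∧
        finrank 𝔽 ↥(P₀ ⊔ ⨆ i, (t i).1) = k + s) ∧
      (t m).1 ≤ P₀ ⊔ ⨆ j : {j : Fin r // j ≠ m}, (t j.1).1} with hAm
  set Γ' : Set (Fin r → LineO 𝔽 d) := {t : Fin r → LineO 𝔽 d |
      (∀ i, (t i).1 ≤ P₁ ∧ ¬ (t i).1 ≤ P₀) ∧
      finrank 𝔽 ↥(P₀ ⊔ ⨆ i, (t i).1) = k + s + 1} with hΓ'
  set σu : Submodule 𝔽 (Fin d → 𝔽) := P₀ ⊔ ⨆ j : {j : Fin r // j ≠ m}, (u j).1 with hσu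
  have hσT : ∀ x, (P₀ ⊔ ⨆ j : {j : Fin r // j ≠ m}, ((T x) j.1).1) = σu := by
    intro x
    rw [hσu]
    exact congrArg (P₀ ⊔ ·) (iSup_congr fun j => congrArg Subtype.val (hTj x j))
  have hsupT : ∀ x, P₀ ⊔ ⨆ i, (T x i).1 = σu ⊔ x.1 := by
    intro x
    rw [sup_split P₀ (T x) m, hTm, hσT]
  set Pu : ℝ≥0∞ := ∏ j : {j : Fin r // j ≠ m}, (f (u j) : ℝ≥0∞) with hPu
  have hFT : ∀ x, F (T x) = (f x : ℝ≥0∞) * Pu := by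
    intro x
    show (∏ i, (f (T x i) : ℝ≥0∞)) = (f x : ℝ≥0∞) * Pu
    have h1 : (∏ i, (f (T x i) : ℝ≥0∞)) =
        (f (T x m) : ℝ≥0∞) * ∏ i ∈ Finset.univ.erase m, (f (T x i) : ℝ≥0∞) :=
      (Finset.mul_prod_erase Finset.univ _ (Finset.mem_univ m)).symm
    rw [h1, hTm]
    congr 1
    rw [hPu]
    calc (∏ i ∈ Finset.univ.erase m, (f (T x i) : ℝ≥0∞))
        = ∏ j : {j : Fin r // j ≠ m}, (f (T x j.1) : ℝ≥0∞) :=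
          Finset.prod_subtype (Finset.univ.erase m)
            (p := fun j : Fin r => j ≠ m) (fun x => by simp) (fun i => (f (T x i) : ℝ≥0∞))
      _ = ∏ j : {j : Fin r // j ≠ m}, (f (u j) : ℝ≥0∞) :=
          Finset.prod_congr rfl fun j _ => by rw [hTj x j]
  by_cases hex : ∃ x₀ : LineO 𝔽 d, T x₀ ∈ Am
  · obtain ⟨x₀, hx₀⟩ := hex
    have hx₀le : x₀.1 ≤ σu := by
      have := hx₀.2
      rw [hσT] at this
      rwa [hTm] at this
    have hu1 : ∀ j : {j : Fin r // j ≠ m}, (u j).1 ≤ P₁ ∧ ¬ (u j).1 ≤ P₀ := by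
      intro j
      have := hx₀.1.1 j.1
      rwa [hTj x₀ j] at this
    have hσurank : finrank 𝔽 ↥σu = k + s := by
      have := hx₀.1.2
      rwa [hsupT, sup_eq_left.2 hx₀le] at this
    have hP₀σu : P₀ < σu := by
      refine lt_of_le_of_ne le_sup_left fun hEq => ?_
      rw [← hEq, hk] at hσurank
      omega
    have hσuP₁ : σu < P₁ := by
      have hle : σu ≤ P₁ := sup_le hP₀₁.le (iSup_le fun j => (hu1 j).1)
      refine lt_of_le_of_ne hle fun hEq => ?_
      rw [hEq, hk1] at hσurank
      omega
    have hlight' := hlight σu hP₀σu hσuP₁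
    set ind1 : LineO 𝔽 d → ℝ≥0∞ :=
      Set.indicator {l : LineO 𝔽 d | l.1 ≤ σu ∧ ¬ l.1 ≤ P₀} (fun l => (f l : ℝ≥0∞)) with hi1
    set ind2 : LineO 𝔽 d → ℝ≥0∞ :=
      Set.indicator {l : LineO 𝔽 d | l.1 ≤ P₁ ∧ ¬ l.1 ≤ σu} (fun l => (f l : ℝ≥0∞)) with hi2
    have e1 : (∑' x, ind1 x) =
        ∑' l : {l : LineO 𝔽 d // l.1 ≤ σu ∧ ¬ l.1 ≤ P₀}, (f l.1 : ℝ≥0∞) :=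
      (tsum_subtype {l : LineO 𝔽 d | l.1 ≤ σu ∧ ¬ l.1 ≤ P₀} (fun l => (f l : ℝ≥0∞))).symm
    have e2 : (∑' x, ind2 x) =
        ∑' l : {l : LineO 𝔽 d // l.1 ≤ P₁ ∧ ¬ l.1 ≤ σu}, (f l.1 : ℝ≥0∞) :=
      (tsum_subtype {l : LineO 𝔽 d | l.1 ≤ P₁ ∧ ¬ l.1 ≤ σu} (fun l => (f l : ℝ≥0∞))).symm
    calc (∑' x, Am.indicator F (T x)) ≤ ∑' x, ind1 x * Pu := by
          refine ENNReal.tsum_le_tsum fun x => ?_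
          by_cases hx : T x ∈ Am
          · have hxσ : x.1 ≤ σu := by
              have := hx.2
              rw [hσT] at this
              rwa [hTm] at this
            have hxP₀ : ¬ x.1 ≤ P₀ := by
              have := (hx.1.1 m).2; rwa [hTm] at this
            rw [Set.indicator_of_mem hx, hFT x, hi1,
              Set.indicator_of_mem (show x ∈ {l : LineO 𝔽 d | l.1 ≤ σu ∧ ¬ l.1 ≤ P₀}
                from ⟨hxσ, hxP₀⟩)]
          · rw [Set.indicator_of_notMem hx]; exact zero_le
      _ = (∑' x, ind1 x) * Pu := ENNReal.tsum_mul_right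
      _ ≤ ((C : ℝ≥0∞) * ∑' x, ind2 x) * Pu := by
          refine mul_le_mul_left ?_ Pu
          rw [e1, e2]; exact hlight'
      _ = (C : ℝ≥0∞) * ∑' x, ind2 x * Pu := by
          rw [mul_assoc, ENNReal.tsum_mul_right]
      _ ≤ (C : ℝ≥0∞) * ∑' x, Γ'.indicator F (T x) := by
          refine mul_le_mul_right (ENNReal.tsum_le_tsum fun x => ?_) _
          by_cases hx : x ∈ {l : LineO 𝔽 d | l.1 ≤ P₁ ∧ ¬ l.1 ≤ σu}
          · have hxΓ : T x ∈ Γ' := by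
              constructor
              · intro i
                by_cases hi : i = m
                · subst hi
                  rw [hTm]
                  exact ⟨hx.1, fun hle => hx.2 (hle.trans le_sup_left)⟩
                · rw [show T x i = u ⟨i, hi⟩ from hTj x ⟨i, hi⟩]
                  exact hu1 ⟨i, hi⟩
              · rw [hsupT, finrank_sup_line x hx.2, hσurank]
            rw [hi2, Set.indicator_of_mem hx, Set.indicator_of_mem hxΓ, hFT x]
          · rw [hi2, Set.indicator_of_notMem hx, zero_mul]; exact zero_le
  · push_neg at hex
    have hz : (∑' x, Am.indicator F (T x)) = 0 := by
      refine ENNReal.tsum_eq_zero.2 fun x => ?_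
      rw [Set.indicator_of_notMem (hex x)]
    rw [hz]
    exact zero_le

end aux

theorem gamma_step (r s : ℕ) (hs : 1 ≤ s) (hsr : s < r) (C : ℝ≥0) :
    ∃ β' : ℝ≥0,
      ∀ (𝔽 : Type*) [Field 𝔽] (d k : ℕ)
        (P₀ P₁ : Submodule 𝔽 (Fin d → 𝔽)), P₀ < P₁ →
        Module.finrank 𝔽 P₀ = k → Module.finrank 𝔽 P₁ = k + r →
        ∀ f : LineO 𝔽 d → ℝ≥0, (Function.support f).Finite →
        -- the lightness hypothesis for every intermediate subspace π
        (∀ π : Submodule 𝔽 (Fin d → 𝔽), P₀ < π → π < P₁ →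
          (∑' l : {l : LineO 𝔽 d // l.1 ≤ π ∧ ¬ l.1 ≤ P₀}, (f l.1 : ℝ≥0∞)) ≤
            (C : ℝ≥0∞) *
              ∑' l : {l : LineO 𝔽 d // l.1 ≤ P₁ ∧ ¬ l.1 ≤ π}, (f l.1 : ℝ≥0∞)) →
        -- conclusion: Σ_{Γ_j} ∏ f ≤ β' Σ_{Γ_{j+1}} ∏ f, where j = k + s
        (∑' t : {t : Fin r → LineO 𝔽 d //
              (∀ i, (t i).1 ≤ P₁ ∧ ¬ (t i).1 ≤ P₀) ∧
              Module.finrank 𝔽 ↥(P₀ ⊔ ⨆ i, (t i).1) = k + s},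
            ∏ i, (f (t.1 i) : ℝ≥0∞)) ≤
          (β' : ℝ≥0∞) *
            ∑' t : {t : Fin r → LineO 𝔽 d //
                (∀ i, (t i).1 ≤ P₁ ∧ ¬ (t i).1 ≤ P₀) ∧
                Module.finrank 𝔽 ↥(P₀ ⊔ ⨆ i, (t i).1) = k + s + 1},
              ∏ i, (f (t.1 i) : ℝ≥0∞) := by
  classical
  refine ⟨(r : ℝ≥0) * C, ?_⟩
  intro 𝔽 _ d k P₀ P₁ hP₀₁ hk hk1 f _hf hlight
  set F : (Fin r → LineO 𝔽 d) → ℝ≥0∞ := fun t => ∏ i, (f (t i) : ℝ≥0∞) with hF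
  set Γ : ℕ → Set (Fin r → LineO 𝔽 d) := fun n =>
    {t | (∀ i, (t i).1 ≤ P₁ ∧ ¬ (t i).1 ≤ P₀) ∧
      Module.finrank 𝔽 ↥(P₀ ⊔ ⨆ i, (t i).1) = n} with hΓ
  have key : ∀ n : ℕ,
      (∑' t : {t : Fin r → LineO 𝔽 d //
          (∀ i, (t i).1 ≤ P₁ ∧ ¬ (t i).1 ≤ P₀) ∧
          Module.finrank 𝔽 ↥(P₀ ⊔ ⨆ i, (t i).1) = n},
        ∏ i, (f (t.1 i) : ℝ≥0∞)) = ∑' t, (Γ n).indicator F t :=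
    fun n => tsum_subtype (Γ n) F
  rw [key (k + s), key (k + s + 1)]
  set R : ℝ≥0∞ := ∑' t, (Γ (k + s + 1)).indicator F t with hR
  set A : Fin r → Set (Fin r → LineO 𝔽 d) := fun m =>
    {t : Fin r → LineO 𝔽 d |
      ((∀ i, (t i).1 ≤ P₁ ∧ ¬ (t i).1 ≤ P₀) ∧
        Module.finrank 𝔽 ↥(P₀ ⊔ ⨆ i, (t i).1) = k + s) ∧
      (t m).1 ≤ P₀ ⊔ ⨆ j : {j : Fin r // j ≠ m}, (t j.1).1} with hA
  have step1 : (∑' t, (Γ (k + s)).indicator F t) ≤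
      ∑ m : Fin r, ∑' t, (A m).indicator F t := by
    rw [← Summable.tsum_finsetSum (fun i _ => ENNReal.summable)]
    refine ENNReal.tsum_le_tsum fun t => ?_
    by_cases ht : t ∈ Γ (k + s)
    · obtain ⟨m, hm⟩ := exists_redundant hsr P₀ hk t ht.2
      have htA : t ∈ A m := ⟨ht, hm⟩
      calc (Γ (k + s)).indicator F t = (A m).indicator F t := by
            rw [Set.indicator_of_mem ht, Set.indicator_of_mem htA]
        _ ≤ ∑ m' : Fin r, (A m').indicator F t :=
            Finset.single_le_sum (f := fun m' => (A m').indicator F t)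
              (fun _ _ => zero_le) (Finset.mem_univ m)
    · simp [Set.indicator_of_notMem ht]
  have step2 : ∀ m : Fin r, (∑' t, (A m).indicator F t) ≤ (C : ℝ≥0∞) * R := by
    intro m
    have swap : ∀ g : (Fin r → LineO 𝔽 d) → ℝ≥0∞,
        (∑' t, g t) =
          ∑' (u : {j : Fin r // j ≠ m} → LineO 𝔽 d) (x : LineO 𝔽 d),
            g ((Equiv.funSplitAt m (LineO 𝔽 d)).symm (x, u)) := by
      intro g
      rw [← Equiv.tsum_eq (Equiv.funSplitAt m (LineO 𝔽 d)).symm g]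
      rw [ENNReal.tsum_prod']
      exact ENNReal.tsum_comm ▸ rfl
    rw [swap, hR, swap (fun t => (Γ (k + s + 1)).indicator F t), ← ENNReal.tsum_mul_left]
    refine ENNReal.tsum_le_tsum fun u => ?_
    have hTm : ∀ x : LineO 𝔽 d, (Equiv.funSplitAt m (LineO 𝔽 d)).symm (x, u) m = x := by
      intro x
      rw [Equiv.funSplitAt_symm_apply, dif_pos rfl]
    have hTj : ∀ (x : LineO 𝔽 d) (j : {j : Fin r // j ≠ m}),
        (Equiv.funSplitAt m (LineO 𝔽 d)).symm (x, u) j.1 = u j := by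
      intro x j
      rw [Equiv.funSplitAt_symm_apply, dif_neg j.2, Subtype.coe_eta]
    exact inner_bound P₀ P₁ hP₀₁ hk hk1 hs hsr C f hlight m u
      (fun x => (Equiv.funSplitAt m (LineO 𝔽 d)).symm (x, u)) hTm hTj
  calc (∑' t, (Γ (k + s)).indicator F t) ≤ ∑ m : Fin r, ∑' t, (A m).indicator F t := step1
    _ ≤ ∑ _m : Fin r, (C : ℝ≥0∞) * R := Finset.sum_le_sum fun m _ => step2 m
    _ = (((r : ℝ≥0) * C : ℝ≥0) : ℝ≥0∞) * R := by
        rw [Finset.sum_const, Finset.card_univ, Fintype.card_fin, nsmul_eq_mul,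
          ENNReal.coe_mul, mul_assoc]
        norm_cast
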